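/- Let a ≥ 2 be an integer and f(x,y,z) = x^a y + y^a z + ω z^a x with ω a fixed nonzero complex number. The Milnor number of f at the origin, i.e. dim_ℂ ℂ[x,y,z]/(∂f/∂x, ∂f/∂y, ∂f/∂z), equals a^3. -/

import Mathlib

open MvPolynomial

namespace Stmt9Aux

noncomputable section

abbrev A := MvPolynomial (Fin 3) ℂ

def mon (i j k : ℕ) : A := X 0 ^ i * X 1 ^ j * X 2 ^ k

variable (a : ℕ) (ω : ℂ)

def g1 : A := C (a:ℂ) * X 0 ^ (a-1) * X 1 + C ω * X 2 ^ a
def g2 : A := X 0 ^ a + C (a:ℂ) * X 1 ^ (a-1) * X 2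
def g3 : A := X 1 ^ a + C ((a:ℂ)*ω) * X 2 ^ (a-1) * X 0

def J : Ideal A := Ideal.span {g1 a ω, g2 a, g3 a ω}

def Zc (i j k : ℕ) : Prop :=
  (a ≤ i ∧ 1 ≤ j) ∨ (a ≤ j ∧ 1 ≤ k) ∨ (a ≤ k ∧ 1 ≤ i) ∨
  (a ≤ i ∧ a-1 ≤ k) ∨ (a ≤ j ∧ a-1 ≤ i) ∨ (a ≤ k ∧ a-1 ≤ j) ∨
  2*a ≤ i ∨ 2*a ≤ j ∨ 2*a ≤ k

instance (i j k : ℕ) : Decidable (Zc a i j k) := by unfold Zc; infer_instance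

def nf (i j k : ℕ) : A :=
  if Zc a i j k then 0
  else if a ≤ i then -(a:ℂ) • mon (i-a) (j+(a-1)) (k+1)
  else if a ≤ j then -((a:ℂ)*ω) • mon (i+1) (j-a) (k+(a-1))
  else if a ≤ k then -((a:ℂ)/ω) • mon (i+(a-1)) (j+1) (k-a)
  else mon i j k

lemma mon_mul (i j k i' j' k' : ℕ) : mon i j k * mon i' j' k' = mon (i+i') (j+j') (k+k') := by
  simp [mon, pow_add]; ring

lemma monomial_eq_mon (v : Fin 3 →₀ ℕ) : monomial v (1:ℂ) = mon (v 0) (v 1) (v 2) := by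
  have hv : v = Finsupp.single 0 (v 0) + Finsupp.single 1 (v 1) + Finsupp.single 2 (v 2) := by
    ext i; fin_cases i <;> simp [Finsupp.single_apply]
  rw [hv]
  simp [mon, X_pow_eq_monomial, monomial_mul]

/-! ### membership helpers -/

lemma g1_mem : g1 a ω ∈ J a ω := Ideal.subset_span (by simp)
lemma g2_mem : g2 a ∈ J a ω := Ideal.subset_span (by simp)
lemma g3_mem : g3 a ω ∈ J a ω := Ideal.subset_span (by simp)

lemma div_mem {c : ℂ} (hc : c ≠ 0) {p : A} (h : C c * p ∈ J a ω) : p ∈ J a ω := by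
  have : p = C c⁻¹ * (C c * p) := by
    rw [← mul_assoc, ← map_mul, inv_mul_cancel₀ hc, map_one, one_mul]
  rw [this]
  exact Ideal.mul_mem_left _ _ h

variable {a ω}

lemma one_add_cube_ne (ha : 2 ≤ a) : (1 + (a:ℂ)^3) ≠ 0 := by
  have : ((1 + a^3 : ℕ) : ℂ) ≠ 0 := Nat.cast_ne_zero.mpr (by positivity)
  push_cast at this
  convert this using 2

lemma memZ1 (ha : 2 ≤ a) : mon a 1 0 ∈ J a ω := by
  apply div_mem a ω (one_add_cube_ne ha)
  have hid : C (1 + (a:ℂ)^3) * mon a 1 0 =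
      C ((a:ℂ)^2) * X 0 * g1 a ω + X 1 * g2 a + (-(C (a:ℂ))) * X 2 * g3 a ω := by
    obtain ⟨n, rfl⟩ : ∃ n, a = n + 2 := ⟨a - 2, by omega⟩
    have h1 : n + 2 - 1 = n + 1 := by omega
    simp only [g1, g2, g3, mon, h1, map_add, map_mul, map_pow, map_one]
    push_cast; ring
  rw [hid]
  exact add_mem (add_mem (Ideal.mul_mem_left _ _ (g1_mem a ω)) (Ideal.mul_mem_left _ _ (g2_mem a ω)))
    (Ideal.mul_mem_left _ _ (g3_mem a ω))

lemma memZ2 (ha : 2 ≤ a) : mon 0 a 1 ∈ J a ω := by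
  apply div_mem a ω (one_add_cube_ne ha)
  have hid : C (1 + (a:ℂ)^3) * mon 0 a 1 =
      (-(C (a:ℂ))) * X 0 * g1 a ω + C ((a:ℂ)^2) * X 1 * g2 a + X 2 * g3 a ω := by
    obtain ⟨n, rfl⟩ : ∃ n, a = n + 2 := ⟨a - 2, by omega⟩
    have h1 : n + 2 - 1 = n + 1 := by omega
    simp only [g1, g2, g3, mon, h1, map_add, map_mul, map_pow, map_one]
    push_cast; ring
  rw [hid]
  exact add_mem (add_mem (Ideal.mul_mem_left _ _ (g1_mem a ω)) (Ideal.mul_mem_left _ _ (g2_mem a ω)))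
    (Ideal.mul_mem_left _ _ (g3_mem a ω))

lemma memZ3 (ha : 2 ≤ a) (hω : ω ≠ 0) : mon 1 0 a ∈ J a ω := by
  apply div_mem a ω (mul_ne_zero (one_add_cube_ne ha) hω)
  have hid : C ((1 + (a:ℂ)^3) * ω) * mon 1 0 a =
      X 0 * g1 a ω + (-(C (a:ℂ))) * X 1 * g2 a + C ((a:ℂ)^2) * X 2 * g3 a ω := by
    obtain ⟨n, rfl⟩ : ∃ n, a = n + 2 := ⟨a - 2, by omega⟩
    have h1 : n + 2 - 1 = n + 1 := by omega
    simp only [g1, g2, g3, mon, h1, map_add, map_mul, map_pow, map_one]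
    push_cast; ring
  rw [hid]
  exact add_mem (add_mem (Ideal.mul_mem_left _ _ (g1_mem a ω)) (Ideal.mul_mem_left _ _ (g2_mem a ω)))
    (Ideal.mul_mem_left _ _ (g3_mem a ω))

lemma memZ4 (ha : 2 ≤ a) (hω : ω ≠ 0) : mon a 0 (a-1) ∈ J a ω := by
  apply div_mem a ω (mul_ne_zero (one_add_cube_ne ha) hω)
  have hid : C ((1 + (a:ℂ)^3) * ω) * mon a 0 (a-1) =
      (-(C (a:ℂ))) * X 1 ^ (a-1) * g1 a ω + C ω * X 2 ^ (a-1) * g2 a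
        + C ((a:ℂ)^2) * X 0 ^ (a-1) * g3 a ω := by
    obtain ⟨n, rfl⟩ : ∃ n, a = n + 2 := ⟨a - 2, by omega⟩
    have h1 : n + 2 - 1 = n + 1 := by omega
    simp only [g1, g2, g3, mon, h1, map_add, map_mul, map_pow, map_one]
    push_cast; ring
  rw [hid]
  exact add_mem (add_mem (Ideal.mul_mem_left _ _ (g1_mem a ω)) (Ideal.mul_mem_left _ _ (g2_mem a ω)))
    (Ideal.mul_mem_left _ _ (g3_mem a ω))

lemma memZ5 (ha : 2 ≤ a) (hω : ω ≠ 0) : mon (a-1) a 0 ∈ J a ω := by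
  have hid : mon (a-1) a 0 =
      X 0 ^ (a-1) * g3 a ω + (-(C ((a:ℂ)*ω))) * mon a 0 (a-1) := by
    obtain ⟨n, rfl⟩ : ∃ n, a = n + 2 := ⟨a - 2, by omega⟩
    have h1 : n + 2 - 1 = n + 1 := by omega
    simp only [g1, g2, g3, mon, h1, map_add, map_mul, map_pow, map_one]
    push_cast; ring
  rw [hid]
  exact add_mem (Ideal.mul_mem_left _ _ (g3_mem a ω)) (Ideal.mul_mem_left _ _ (memZ4 ha hω))

lemma memZ6 (ha : 2 ≤ a) (hω : ω ≠ 0) : mon 0 (a-1) a ∈ J a ω := by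
  apply div_mem a ω hω
  have hid : C ω * mon 0 (a-1) a =
      X 1 ^ (a-1) * g1 a ω + (-(C (a:ℂ))) * mon (a-1) a 0 := by
    obtain ⟨n, rfl⟩ : ∃ n, a = n + 2 := ⟨a - 2, by omega⟩
    have h1 : n + 2 - 1 = n + 1 := by omega
    simp only [g1, g2, g3, mon, h1, map_add, map_mul, map_pow, map_one]
    push_cast; ring
  rw [hid]
  exact add_mem (Ideal.mul_mem_left _ _ (g1_mem a ω)) (Ideal.mul_mem_left _ _ (memZ5 ha hω))

lemma memZ7 (ha : 2 ≤ a) : mon (2*a) 0 0 ∈ J a ω := by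
  have hid : mon (2*a) 0 0 =
      X 0 ^ a * g2 a + (-(C (a:ℂ))) * mon 0 (a-2) 1 * mon a 1 0 := by
    obtain ⟨n, rfl⟩ : ∃ n, a = n + 2 := ⟨a - 2, by omega⟩
    have h1 : n + 2 - 1 = n + 1 := by omega
    have h2 : n + 2 - 2 = n := by omega
    simp only [g1, g2, g3, mon, h1, h2, map_add, map_mul, map_pow, map_one]
    push_cast; ring
  rw [hid]
  exact add_mem (Ideal.mul_mem_left _ _ (g2_mem a ω)) (Ideal.mul_mem_left _ _ (memZ1 ha))

lemma memZ8 (ha : 2 ≤ a) : mon 0 (2*a) 0 ∈ J a ω := by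
  have hid : mon 0 (2*a) 0 =
      X 1 ^ a * g3 a ω + (-(C ((a:ℂ)*ω))) * mon 1 0 (a-2) * mon 0 a 1 := by
    obtain ⟨n, rfl⟩ : ∃ n, a = n + 2 := ⟨a - 2, by omega⟩
    have h1 : n + 2 - 1 = n + 1 := by omega
    have h2 : n + 2 - 2 = n := by omega
    simp only [g1, g2, g3, mon, h1, h2, map_add, map_mul, map_pow, map_one]
    push_cast; ring
  rw [hid]
  exact add_mem (Ideal.mul_mem_left _ _ (g3_mem a ω)) (Ideal.mul_mem_left _ _ (memZ2 ha))

lemma memZ9 (ha : 2 ≤ a) (hω : ω ≠ 0) : mon 0 0 (2*a) ∈ J a ω := by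
  apply div_mem a ω hω
  have hid : C ω * mon 0 0 (2*a) =
      X 2 ^ a * g1 a ω + (-(C (a:ℂ))) * mon (a-2) 1 0 * mon 1 0 a := by
    obtain ⟨n, rfl⟩ : ∃ n, a = n + 2 := ⟨a - 2, by omega⟩
    have h1 : n + 2 - 1 = n + 1 := by omega
    have h2 : n + 2 - 2 = n := by omega
    simp only [g1, g2, g3, mon, h1, h2, map_add, map_mul, map_pow, map_one]
    push_cast; ring
  rw [hid]
  exact add_mem (Ideal.mul_mem_left _ _ (g1_mem a ω)) (Ideal.mul_mem_left _ _ (memZ3 ha hω))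

lemma mon_dvd_mem {s t u : ℕ} (hbase : mon s t u ∈ J a ω) {i j k : ℕ}
    (hs : s ≤ i) (ht : t ≤ j) (hu : u ≤ k) : mon i j k ∈ J a ω := by
  have : mon i j k = mon (i-s) (j-t) (k-u) * mon s t u := by
    rw [mon_mul]
    rw [show i - s + s = i by omega, show j - t + t = j by omega, show k - u + u = k by omega]
  rw [this]
  exact Ideal.mul_mem_left _ _ hbase

lemma zc_mem (ha : 2 ≤ a) (hω : ω ≠ 0) {i j k : ℕ} (h : Zc a i j k) :
    mon i j k ∈ J a ω := by
  unfold Zc at h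
  rcases h with ⟨h1,h2⟩|⟨h1,h2⟩|⟨h1,h2⟩|⟨h1,h2⟩|⟨h1,h2⟩|⟨h1,h2⟩|h|h|h
  · exact mon_dvd_mem (memZ1 ha) h1 h2 (by omega)
  · exact mon_dvd_mem (memZ2 ha) (by omega) h1 h2
  · exact mon_dvd_mem (memZ3 ha hω) h2 (by omega) h1
  · exact mon_dvd_mem (memZ4 ha hω) h1 (by omega) h2
  · exact mon_dvd_mem (memZ5 ha hω) h2 h1 (by omega)
  · exact mon_dvd_mem (memZ6 ha hω) (by omega) h2 h1
  · exact mon_dvd_mem (memZ7 ha) h (by omega) (by omega)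
  · exact mon_dvd_mem (memZ8 ha) (by omega) h (by omega)
  · exact mon_dvd_mem (memZ9 ha hω) (by omega) (by omega) h


lemma nf_std {i j k : ℕ} (hi : i < a) (hj : j < a) (hk : k < a) :
    nf a ω i j k = mon i j k := by
  have hz : ¬ Zc a i j k := by unfold Zc; omega
  simp only [nf, if_neg hz, if_neg (by omega : ¬ a ≤ i), if_neg (by omega : ¬ a ≤ j),
    if_neg (by omega : ¬ a ≤ k)]

lemma Dg2 (ha : 2 ≤ a) (i j k : ℕ) :
    nf a ω (i+a) j k + (a:ℂ) • nf a ω i (j+(a-1)) (k+1) = 0 := by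
  by_cases hz : Zc a (i+a) j k
  · have hz2 : Zc a i (j+(a-1)) (k+1) := by revert hz; unfold Zc; omega
    simp [nf, hz, hz2]
  · have hz2 : ¬ Zc a i (j+(a-1)) (k+1) := by revert hz; unfold Zc; omega
    have h1 : ¬ a ≤ i := by revert hz; unfold Zc; omega
    have h2 : ¬ a ≤ j + (a-1) := by revert hz; unfold Zc; omega
    have h3 : ¬ a ≤ k + 1 := by revert hz; unfold Zc; omega
    simp only [nf, if_neg hz, if_neg hz2, if_pos (show a ≤ i+a by omega), if_neg h1,
      if_neg h2, if_neg h3, show i + a - a = i by omega]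
    simp [neg_smul]

lemma Dg3 (ha : 2 ≤ a) (i j k : ℕ) :
    nf a ω i (j+a) k + ((a:ℂ)*ω) • nf a ω (i+1) j (k+(a-1)) = 0 := by
  by_cases hz : Zc a i (j+a) k
  · have hz2 : Zc a (i+1) j (k+(a-1)) := by revert hz; unfold Zc; omega
    simp [nf, hz, hz2]
  · have hz2 : ¬ Zc a (i+1) j (k+(a-1)) := by revert hz; unfold Zc; omega
    have h1 : ¬ a ≤ i := by revert hz; unfold Zc; omega
    have h1' : ¬ a ≤ i + 1 := by revert hz; unfold Zc; omega
    have h2 : ¬ a ≤ j := by revert hz; unfold Zc; omega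
    have h3 : ¬ a ≤ k + (a-1) := by revert hz; unfold Zc; omega
    simp only [nf, if_neg hz, if_neg hz2, if_pos (show a ≤ j+a by omega), if_neg h1,
      if_neg h1', if_neg h2, if_neg h3, show j + a - a = j by omega]
    simp [neg_smul]

lemma Dg1 (ha : 2 ≤ a) (hω : ω ≠ 0) (i j k : ℕ) :
    (a:ℂ) • nf a ω (i+(a-1)) (j+1) k + ω • nf a ω i j (k+a) = 0 := by
  by_cases hz : Zc a (i+(a-1)) (j+1) k
  · have hz2 : Zc a i j (k+a) := by revert hz; unfold Zc; omega
    simp [nf, hz, hz2]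
  · have hz2 : ¬ Zc a i j (k+a) := by revert hz; unfold Zc; omega
    have h1 : ¬ a ≤ i := by revert hz; unfold Zc; omega
    have h1' : ¬ a ≤ i + (a-1) := by revert hz; unfold Zc; omega
    have h2 : ¬ a ≤ j := by revert hz; unfold Zc; omega
    have h2' : ¬ a ≤ j + 1 := by revert hz; unfold Zc; omega
    have h3 : ¬ a ≤ k := by revert hz; unfold Zc; omega
    simp only [nf, if_neg hz, if_neg hz2, if_pos (show a ≤ k+a by omega), if_neg h1,
      if_neg h1', if_neg h2, if_neg h2', if_neg h3, show k + a - a = k by omega]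
    rw [smul_smul, show ω * -((a:ℂ)/ω) = -(a:ℂ) by field_simp]
    simp [neg_smul]

variable (a ω) in
def L : A →ₗ[ℂ] A :=
  (basisMonomials (Fin 3) ℂ).constr ℂ (fun v => nf a ω (v 0) (v 1) (v 2))

lemma L_mon (i j k : ℕ) : L a ω (mon i j k) = nf a ω i j k := by
  set w : Fin 3 →₀ ℕ := Finsupp.single 0 i + Finsupp.single 1 j + Finsupp.single 2 k with hwdef
  have h0 : w 0 = i := by simp [hwdef, Finsupp.single_apply]
  have h1 : w 1 = j := by simp [hwdef, Finsupp.single_apply]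
  have h2 : w 2 = k := by simp [hwdef, Finsupp.single_apply]
  have hb : (basisMonomials (Fin 3) ℂ) w = mon i j k := by
    rw [congrFun (coe_basisMonomials (Fin 3) ℂ) w, monomial_eq_mon, h0, h1, h2]
  rw [← hb, L, Module.Basis.constr_basis, h0, h1, h2]

-- products with monomials
lemma g1_mul_mon (i j k : ℕ) :
    g1 a ω * mon i j k = C (a:ℂ) * mon (i+(a-1)) (j+1) k + C ω * mon i j (k+a) := by
  simp only [g1, mon, pow_add]; ring

lemma g2_mul_mon (i j k : ℕ) :
    g2 a * mon i j k = mon (i+a) j k + C (a:ℂ) * mon i (j+(a-1)) (k+1) := by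
  simp only [g2, mon, pow_add]; ring

lemma g3_mul_mon (i j k : ℕ) :
    g3 a ω * mon i j k = mon i (j+a) k + C ((a:ℂ)*ω) * mon (i+1) j (k+(a-1)) := by
  simp only [g3, mon, pow_add]; ring


lemma L_g2_mul (ha : 2 ≤ a) (p : A) : L a ω (g2 a * p) = 0 := by
  have h : (L a ω).comp (LinearMap.mulLeft ℂ (g2 a)) = 0 := by
    apply (basisMonomials (Fin 3) ℂ).ext
    intro v
    rw [LinearMap.comp_apply, LinearMap.mulLeft_apply, LinearMap.zero_apply,
      congrFun (coe_basisMonomials (Fin 3) ℂ) v]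
    rw [monomial_eq_mon, g2_mul_mon, map_add, C_mul', map_smul, L_mon, L_mon]
    exact Dg2 ha _ _ _
  exact DFunLike.congr_fun h p

lemma L_g3_mul (ha : 2 ≤ a) (p : A) : L a ω (g3 a ω * p) = 0 := by
  have h : (L a ω).comp (LinearMap.mulLeft ℂ (g3 a ω)) = 0 := by
    apply (basisMonomials (Fin 3) ℂ).ext
    intro v
    rw [LinearMap.comp_apply, LinearMap.mulLeft_apply, LinearMap.zero_apply,
      congrFun (coe_basisMonomials (Fin 3) ℂ) v]
    rw [monomial_eq_mon, g3_mul_mon, map_add, C_mul', map_smul, L_mon, L_mon]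
    exact Dg3 ha _ _ _
  exact DFunLike.congr_fun h p

lemma L_g1_mul (ha : 2 ≤ a) (hω : ω ≠ 0) (p : A) : L a ω (g1 a ω * p) = 0 := by
  have h : (L a ω).comp (LinearMap.mulLeft ℂ (g1 a ω)) = 0 := by
    apply (basisMonomials (Fin 3) ℂ).ext
    intro v
    rw [LinearMap.comp_apply, LinearMap.mulLeft_apply, LinearMap.zero_apply,
      congrFun (coe_basisMonomials (Fin 3) ℂ) v]
    rw [monomial_eq_mon, g1_mul_mon, map_add, C_mul', C_mul', map_smul, map_smul, L_mon, L_mon]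
    exact Dg1 ha hω _ _ _
  exact DFunLike.congr_fun h p

lemma L_ideal (ha : 2 ≤ a) (hω : ω ≠ 0) {p : A} (hp : p ∈ J a ω) : L a ω p = 0 := by
  unfold J at hp
  rw [show ({g1 a ω, g2 a, g3 a ω} : Set A) = insert (g1 a ω) {g2 a, g3 a ω} from rfl,
    Ideal.mem_span_insert] at hp
  obtain ⟨r, z, hz, rfl⟩ := hp
  rw [Ideal.mem_span_pair] at hz
  obtain ⟨u, v, rfl⟩ := hz
  rw [map_add, map_add]
  rw [mul_comm r _, mul_comm u _, mul_comm v _]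
  rw [L_g1_mul ha hω, L_g2_mul ha, L_g3_mul ha]
  ring

lemma pd0 (ha : 2 ≤ a) (f : A) (hf : f = X 0 ^ a * X 1 + X 1 ^ a * X 2 + C ω * (X 2 ^ a * X 0)) :
    pderiv 0 f = g1 a ω := by
  subst hf
  simp [g1, pderiv_mul, pderiv_pow, pderiv_C_mul]
  ring

lemma pd1 (ha : 2 ≤ a) (f : A) (hf : f = X 0 ^ a * X 1 + X 1 ^ a * X 2 + C ω * (X 2 ^ a * X 0)) :
    pderiv 1 f = g2 a := by
  subst hf
  simp [g2, pderiv_mul, pderiv_pow, pderiv_C_mul]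
  ring

lemma pd2 (ha : 2 ≤ a) (f : A) (hf : f = X 0 ^ a * X 1 + X 1 ^ a * X 2 + C ω * (X 2 ^ a * X 0)) :
    pderiv 2 f = g3 a ω := by
  subst hf
  simp [g3, pderiv_mul, pderiv_pow, pderiv_C_mul]
  ring


lemma idRx {i : ℕ} (hi : a ≤ i) (j k : ℕ) :
    mon i j k + C (a:ℂ) * mon (i-a) (j+(a-1)) (k+1) = mon (i-a) j k * g2 a := by
  obtain ⟨m, rfl⟩ : ∃ m, i = m + a := ⟨i - a, by omega⟩
  rw [Nat.add_sub_cancel]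
  simp only [g2, mon, pow_add]; ring

lemma idRy {j : ℕ} (hj : a ≤ j) (i k : ℕ) :
    mon i j k + C ((a:ℂ)*ω) * mon (i+1) (j-a) (k+(a-1)) = mon i (j-a) k * g3 a ω := by
  obtain ⟨m, rfl⟩ : ∃ m, j = m + a := ⟨j - a, by omega⟩
  rw [Nat.add_sub_cancel]
  simp only [g3, mon, pow_add]; ring

lemma idRz {k : ℕ} (hk : a ≤ k) (i j : ℕ) :
    C ω * mon i j k + C (a:ℂ) * mon (i+(a-1)) (j+1) (k-a) = mon i j (k-a) * g1 a ω := by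
  obtain ⟨m, rfl⟩ : ∃ m, k = m + a := ⟨k - a, by omega⟩
  rw [Nat.add_sub_cancel]
  simp only [g1, mon, pow_add]; ring


variable (a ω) in
def fam : Fin a × Fin a × Fin a → (A ⧸ J a ω) := fun t =>
  Ideal.Quotient.mkₐ ℂ (J a ω) (mon t.1 t.2.1 t.2.2)

lemma mem_fam {i j k : ℕ} (hi : i < a) (hj : j < a) (hk : k < a) :
    Ideal.Quotient.mkₐ ℂ (J a ω) (mon i j k) ∈ Submodule.span ℂ (Set.range (fam a ω)) :=
  Submodule.subset_span ⟨(⟨i, hi⟩, ⟨j, hj⟩, ⟨k, hk⟩), rfl⟩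

lemma mk_mul_g_eq_zero {p q : A} (hq : q ∈ J a ω) :
    Ideal.Quotient.mkₐ ℂ (J a ω) (p * q) = 0 := by
  rw [Ideal.Quotient.mkₐ_eq_mk, Ideal.Quotient.eq_zero_iff_mem]
  exact Ideal.mul_mem_left _ _ hq

lemma mem_span_mon (ha : 2 ≤ a) (hω : ω ≠ 0) (i j k : ℕ) :
    Ideal.Quotient.mkₐ ℂ (J a ω) (mon i j k) ∈ Submodule.span ℂ (Set.range (fam a ω)) := by
  by_cases hz : Zc a i j k
  · rw [Ideal.Quotient.mkₐ_eq_mk, Ideal.Quotient.eq_zero_iff_mem.mpr (zc_mem ha hω hz)]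
    exact Submodule.zero_mem _
  by_cases hi : a ≤ i
  · have hb : i - a < a ∧ j + (a-1) < a ∧ k + 1 < a := by revert hz; unfold Zc; omega
    have h := congrArg (Ideal.Quotient.mkₐ ℂ (J a ω)) (idRx hi j k)
    rw [map_add, C_mul', map_smul, mk_mul_g_eq_zero (g2_mem a ω), add_eq_zero_iff_eq_neg] at h
    rw [h]
    exact Submodule.neg_mem _ (Submodule.smul_mem _ _ (mem_fam hb.1 hb.2.1 hb.2.2))
  by_cases hj : a ≤ j
  · have hb : i + 1 < a ∧ j - a < a ∧ k + (a-1) < a := by revert hz; unfold Zc; omega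
    have h := congrArg (Ideal.Quotient.mkₐ ℂ (J a ω)) (idRy (ω := ω) hj i k)
    rw [map_add, C_mul', map_smul, mk_mul_g_eq_zero (g3_mem a ω), add_eq_zero_iff_eq_neg] at h
    rw [h]
    exact Submodule.neg_mem _ (Submodule.smul_mem _ _ (mem_fam hb.1 hb.2.1 hb.2.2))
  by_cases hk : a ≤ k
  · have hb : i + (a-1) < a ∧ j + 1 < a ∧ k - a < a := by revert hz; unfold Zc; omega
    have h := congrArg (Ideal.Quotient.mkₐ ℂ (J a ω)) (idRz (ω := ω) hk i j)
    rw [map_add, C_mul', C_mul', map_smul, map_smul, mk_mul_g_eq_zero (g1_mem a ω),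
      add_eq_zero_iff_eq_neg] at h
    have h2 : Ideal.Quotient.mkₐ ℂ (J a ω) (mon i j k) =
        ω⁻¹ • (ω • Ideal.Quotient.mkₐ ℂ (J a ω) (mon i j k)) := by
      rw [smul_smul, inv_mul_cancel₀ hω, one_smul]
    rw [h2, h]
    exact Submodule.smul_mem _ _ (Submodule.neg_mem _
      (Submodule.smul_mem _ _ (mem_fam hb.1 hb.2.1 hb.2.2)))
  · exact mem_fam (by omega) (by omega) (by omega)

lemma span_top (ha : 2 ≤ a) (hω : ω ≠ 0) :
    ⊤ ≤ Submodule.span ℂ (Set.range (fam a ω)) := by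
  intro r _
  obtain ⟨p, rfl⟩ := Ideal.Quotient.mk_surjective r
  rw [← Ideal.Quotient.mkₐ_eq_mk (R₁ := ℂ)]
  rw [MvPolynomial.as_sum p, map_sum]
  apply Submodule.sum_mem
  intro v hv
  have : monomial v (coeff v p) = coeff v p • monomial v (1:ℂ) := by
    rw [smul_monomial, smul_eq_mul, mul_one]
  rw [this, map_smul, monomial_eq_mon]
  exact Submodule.smul_mem _ _ (mem_span_mon ha hω _ _ _)

lemma indep (ha : 2 ≤ a) (hω : ω ≠ 0) : LinearIndependent ℂ (fam a ω) := by
  rw [linearIndependent_iff]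
  intro l hl
  set w : Fin a × Fin a × Fin a → (Fin 3 →₀ ℕ) := fun t =>
    Finsupp.single 0 (t.1:ℕ) + Finsupp.single 1 (t.2.1:ℕ) + Finsupp.single 2 (t.2.2:ℕ) with hw
  have hwap : ∀ t : Fin a × Fin a × Fin a,
      (w t) 0 = (t.1:ℕ) ∧ (w t) 1 = (t.2.1:ℕ) ∧ (w t) 2 = (t.2.2:ℕ) := by
    intro t
    refine ⟨?_, ?_, ?_⟩ <;> simp [hw, Finsupp.single_apply]
  set mfam : Fin a × Fin a × Fin a → A := fun t => mon t.1 t.2.1 t.2.2 with hmf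
  have hbw : ∀ t, (basisMonomials (Fin 3) ℂ) (w t) = mfam t := by
    intro t
    rw [congrFun (coe_basisMonomials (Fin 3) ℂ) (w t), monomial_eq_mon,
      (hwap t).1, (hwap t).2.1, (hwap t).2.2]
  set P : A := Finsupp.linearCombination ℂ mfam l with hP
  have hmk : Ideal.Quotient.mkₐ ℂ (J a ω) P = Finsupp.linearCombination ℂ (fam a ω) l := by
    rw [hP]
    exact (Finsupp.apply_linearCombination ℂ (Ideal.Quotient.mkₐ ℂ (J a ω)).toLinearMap
      mfam l).trans (by rfl)
  have hPJ : P ∈ J a ω := by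
    have h0 : Ideal.Quotient.mkₐ ℂ (J a ω) P = 0 := by rw [hmk, hl]
    rw [Ideal.Quotient.mkₐ_eq_mk] at h0
    exact Ideal.Quotient.eq_zero_iff_mem.mp h0
  have hLP : L a ω P = P := by
    have hcomp : ⇑(L a ω) ∘ mfam = mfam := by
      funext t
      exact (L_mon _ _ _).trans (nf_std t.1.isLt t.2.1.isLt t.2.2.isLt)
    rw [hP, Finsupp.apply_linearCombination ℂ (L a ω) mfam l, hcomp]
  have hP0 : P = 0 := by rw [← hLP]; exact L_ideal ha hω hPJ
  have hinj : Function.Injective w := by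
    intro s t hst
    have h0 := congrArg (fun v => v 0) hst
    have h1 := congrArg (fun v => v 1) hst
    have h2 := congrArg (fun v => v 2) hst
    simp only [(hwap s).1, (hwap s).2.1, (hwap s).2.2,
      (hwap t).1, (hwap t).2.1, (hwap t).2.2] at h0 h1 h2
    ext
    · exact h0
    · exact h1
    · exact h2
  have hli : LinearIndependent ℂ mfam := by
    have h := (basisMonomials (Fin 3) ℂ).linearIndependent.comp w hinj
    have : (fun t => (basisMonomials (Fin 3) ℂ) (w t)) = mfam := funext hbw
    rwa [← this]
  exact linearIndependent_iff.mp hli l (hP ▸ hP0)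

lemma main (ha : 2 ≤ a) (hω : ω ≠ 0) :
    Module.finrank ℂ (A ⧸ J a ω) = a ^ 3 := by
  have b : Module.Basis (Fin a × Fin a × Fin a) ℂ (A ⧸ J a ω) :=
    Module.Basis.mk (indep ha hω) (span_top ha hω)
  rw [Module.finrank_eq_card_basis b]
  simp [Fintype.card_prod]
  ring
end
end Stmt9Aux

open MvPolynomial in
/-- The Milnor number of `f = x^a y + y^a z + ω z^a x` (for `a ≥ 2`, `ω ≠ 0`)
is `a³`: the Jacobian ring has complex dimension `a³`. -/
theorem stmt9 (a : ℕ) (ha : 2 ≤ a) (ω : ℂ) (hω : ω ≠ 0) :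
    let f : MvPolynomial (Fin 3) ℂ :=
      X 0 ^ a * X 1 + X 1 ^ a * X 2 + C ω * (X 2 ^ a * X 0)
    Module.finrank ℂ
        (MvPolynomial (Fin 3) ℂ ⧸
          Ideal.span {pderiv 0 f, pderiv 1 f, pderiv 2 f}) = a ^ 3 := by
  intro f
  rw [Stmt9Aux.pd0 ha f rfl, Stmt9Aux.pd1 ha f rfl, Stmt9Aux.pd2 ha f rfl]
  exact Stmt9Aux.main ha hω
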